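/- Let X be a finite set, φ¹, φ² : X → [0,1], K a nonnegative integer with K ≤ |X|, and f(B) = max{ ∑_{x∈S} φ²(x) : S ⊆ B, |S| ≤ K } for B ⊆ X. Consider the linear program D: minimize θ + ∑_{x∈X} φ¹(x)·γ(x) over θ ∈ ℝ and γ : X → ℝ subject to θ + ∑_{x∈B} γ(x) ≥ f(B) for every B ⊆ X. Then there exist an optimal solution (θ*, γ*) of D with θ* ≥ 0 and γ*(x) ≥ 0 for all x, a subset B* ⊆ X with |B*| = K, and a real number α* ≥ 0, such that φ²(x) − γ*(x) = α* for every x ∈ B*, φ²(x) − γ*(x) ≤ α* for every x ∈ X∖B*, and θ* = K·α*. -/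

import Mathlib

open scoped Classical
open MeasureTheory Set Finset
noncomputable section

/-- `max { ∑_{x ∈ S} φ x : S ⊆ s, |S| ≤ K }`. -/
def bestSum {α : Type*} (s : Finset α) (K : ℕ) (φ : α → ℝ) : ℝ :=
  (s.powerset.filter fun S => S.card ≤ K).sup' ⟨∅, by simp⟩ fun S => ∑ x ∈ S, φ x

def cf (p : ℕ → ℝ) (m : ℕ) : ℝ := ∑ i ∈ Finset.range m, p i

lemma cf_succ (p : ℕ → ℝ) (m : ℕ) : cf p (m+1) = cf p m + p m := Finset.sum_range_succ p m

def Bset {X : Type*} [Fintype X] {n : ℕ} (e : Fin n ≃ X) (p : ℕ → ℝ) (u : ℝ) : Finset X :=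
  Finset.univ.filter fun x => (⌈cf p ((e.symm x : ℕ)) - u⌉ : ℝ) < cf p ((e.symm x : ℕ) + 1) - u

lemma ceil01 {a b : ℝ} (h1 : a ≤ b) (h2 : b ≤ a + 1) :
    (if (⌈a⌉:ℝ) < b then (1:ℤ) else 0) = ⌈b⌉ - ⌈a⌉ := by
  split_ifs with h
  · have hub : ⌈b⌉ ≤ ⌈a⌉ + 1 := by
      simpa [Int.ceil_add_intCast] using (Int.ceil_le_ceil (R := ℝ) h2)
    have hlb : ⌈a⌉ + 1 ≤ ⌈b⌉ := by
      have : (⌈a⌉ : ℝ) < (⌈b⌉ : ℝ) := lt_of_lt_of_le h (Int.le_ceil b)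
      exact_mod_cast Int.add_one_le_iff.mpr (by exact_mod_cast this)
    omega
  · have hba : ⌈b⌉ ≤ ⌈a⌉ := by
      push_neg at h
      exact Int.ceil_le.mpr h
    have := Int.ceil_le_ceil (R := ℝ) h1
    omega

lemma ind_eq_mem {X : Type*} [Fintype X] {n : ℕ} (e : Fin n ≃ X) (p : ℕ → ℝ)
    (hp0 : ∀ i, 0 ≤ p i) (hp1 : ∀ i, p i ≤ 1) (x : X) (u : ℝ) :
    (if x ∈ Bset e p u then (1:ℝ) else 0)
      = ((⌈cf p ((e.symm x : ℕ) + 1) - u⌉ : ℤ) : ℝ) - ((⌈cf p (e.symm x : ℕ) - u⌉ : ℤ) : ℝ) := by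
  have h := ceil01 (a := cf p (e.symm x : ℕ) - u) (b := cf p ((e.symm x : ℕ)+1) - u)
    (by rw [cf_succ]; linarith [hp0 (e.symm x : ℕ)])
    (by rw [cf_succ]; linarith [hp1 (e.symm x : ℕ)])
  simp only [Bset, Finset.mem_filter, Finset.mem_univ, true_and]
  exact_mod_cast h

lemma count_lemma {p : ℕ → ℝ} (hp0 : ∀ i, 0 ≤ p i) (hp1 : ∀ i, p i ≤ 1)
    {u : ℝ} (hu : u ∈ Set.Ioo (0:ℝ) 1) (m : ℕ) :
    (((Finset.range m).filter fun i => (⌈cf p i - u⌉:ℝ) < cf p (i+1) - u).card : ℤ)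
      = ⌈cf p m - u⌉ := by
  rw [Finset.card_filter]
  have : ∀ i ∈ Finset.range m, (if (⌈cf p i - u⌉:ℝ) < cf p (i+1) - u then (1:ℤ) else 0)
      = ⌈cf p (i+1) - u⌉ - ⌈cf p i - u⌉ := by
    intro i _
    exact ceil01 (by have := hp0 i; rw [cf_succ]; linarith) (by have := hp1 i; rw [cf_succ]; linarith)
  push_cast
  rw [Finset.sum_congr rfl this, Finset.sum_range_sub (fun i => ⌈cf p i - u⌉)]
  have h0 : ⌈cf p 0 - u⌉ = 0 := by
    rw [Int.ceil_eq_iff]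
    simp [cf]
    constructor <;> [linarith [hu.2]; linarith [hu.1]]
  rw [h0]; ring

lemma card_reindex {n : ℕ} {X : Type*} [Fintype X] (e : Fin n ≃ X) {m : ℕ} (hm : m ≤ n) (Q : ℕ → Prop) :
    (Finset.univ.filter fun x : X => ((e.symm x : ℕ) < m ∧ Q (e.symm x))).card
      = ((Finset.range m).filter fun i => Q i).card := by
  apply Finset.card_bij (fun x _ => ((e.symm x : Fin n) : ℕ))
  · intro a ha
    simp only [Finset.mem_filter, Finset.mem_univ, true_and] at ha
    simp only [Finset.mem_filter, Finset.mem_range]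
    exact ha
  · intro a _ b _ h
    exact e.symm.injective (Fin.ext h)
  · intro b hb
    simp only [Finset.mem_filter, Finset.mem_range] at hb
    refine ⟨e ⟨b, lt_of_lt_of_le hb.1 hm⟩, ?_, ?_⟩
    · simp only [Finset.mem_filter, Finset.mem_univ, true_and, Equiv.symm_apply_apply]
      exact hb
    · simp

/-- Counting elements of `Bset` among the first `m` indices. -/
lemma card_Bset_inter {X : Type*} [Fintype X] {n : ℕ} (e : Fin n ≃ X) {p : ℕ → ℝ}
    (hp0 : ∀ i, 0 ≤ p i) (hp1 : ∀ i, p i ≤ 1) {u : ℝ} (hu : u ∈ Set.Ioo (0:ℝ) 1)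
    {m : ℕ} (hm : m ≤ n) :
    (((Bset e p u) ∩ (Finset.univ.filter fun x : X => (e.symm x : ℕ) < m)).card : ℤ)
      = ⌈cf p m - u⌉ := by
  have hset : (Bset e p u) ∩ (Finset.univ.filter fun x : X => (e.symm x : ℕ) < m)
      = Finset.univ.filter fun x : X => ((e.symm x : ℕ) < m ∧
          ((⌈cf p ((e.symm x : ℕ)) - u⌉ : ℝ) < cf p ((e.symm x : ℕ) + 1) - u)) := by
    ext x
    simp [Bset, Finset.mem_filter, and_comm]
  rw [hset]
  have hcr := card_reindex e hm (fun i => (⌈cf p i - u⌉:ℝ) < cf p (i+1) - u)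
  rw [hcr]
  exact count_lemma hp0 hp1 hu m

lemma psi_eq {c u : ℝ} (hu : u ∈ Set.Ioo (0:ℝ) 1) :
    ((⌈c - u⌉ : ℤ) : ℝ) = (⌊c⌋ : ℝ) + Set.indicator (Set.Ioo (0:ℝ) (Int.fract c)) (fun _ => (1:ℝ)) u := by
  obtain ⟨hu0, hu1⟩ := hu
  have hfr0 : 0 ≤ Int.fract c := Int.fract_nonneg c
  have hfr1 : Int.fract c < 1 := Int.fract_lt_one c
  have hc : c - u = (Int.fract c - u) + (⌊c⌋ : ℝ) := by
    have h2 := Int.floor_add_fract c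
    linarith
  rw [hc, Int.ceil_add_intCast]
  push_cast
  rw [Set.indicator_apply]
  split_ifs with h
  · simp only [Set.mem_Ioo] at h
    have : ⌈Int.fract c - u⌉ = 1 := by
      rw [Int.ceil_eq_iff]
      constructor <;> push_cast <;> linarith [h.2]
    rw [this]; push_cast; ring
  · simp only [Set.mem_Ioo] at h
    have hle : Int.fract c - u ≤ 0 := by
      rcases lt_or_ge u (Int.fract c) with h' | h'
      · exact absurd ⟨hu0, h'⟩ h
      · linarith
    have : ⌈Int.fract c - u⌉ = 0 := by
      rw [Int.ceil_eq_iff]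
      constructor <;> push_cast <;> linarith
    rw [this]; push_cast; ring

lemma psi_integrable (c : ℝ) :
    IntegrableOn (fun u => ((⌈c - u⌉ : ℤ) : ℝ)) (Set.Ioo (0:ℝ) 1) volume := by
  have h1 : IntegrableOn (fun u => (⌊c⌋ : ℝ) + Set.indicator (Set.Ioo (0:ℝ) (Int.fract c)) (fun _ => (1:ℝ)) u) (Set.Ioo (0:ℝ) 1) volume := by
    apply Integrable.add
    · exact integrableOn_const (by simp [Real.volume_Ioo])
    · exact (IntegrableOn.integrable (integrableOn_const (by simp [Real.volume_Ioo]))).indicator measurableSet_Ioo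
  exact IntegrableOn.congr_fun h1 (fun u hu => (psi_eq hu).symm) measurableSet_Ioo

lemma psi_integral (c : ℝ) :
    ∫ u in Set.Ioo (0:ℝ) 1, ((⌈c - u⌉ : ℤ) : ℝ) = c := by
  rw [MeasureTheory.setIntegral_congr_fun measurableSet_Ioo (g := fun u => (⌊c⌋ : ℝ) + Set.indicator (Set.Ioo (0:ℝ) (Int.fract c)) (fun _ => (1:ℝ)) u) (fun u hu => psi_eq hu)]
  rw [MeasureTheory.integral_add (integrableOn_const (by simp [Real.volume_Ioo]) : IntegrableOn (fun _ => (⌊c⌋ : ℝ)) (Set.Ioo (0:ℝ) 1) volume)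
    ((IntegrableOn.integrable (integrableOn_const (by simp [Real.volume_Ioo]))).indicator measurableSet_Ioo)]
  rw [MeasureTheory.setIntegral_const, MeasureTheory.setIntegral_indicator measurableSet_Ioo]
  have hss : Set.Ioo (0:ℝ) 1 ∩ Set.Ioo (0:ℝ) (Int.fract c) = Set.Ioo (0:ℝ) (Int.fract c) := by
    apply Set.inter_eq_self_of_subset_right
    exact Set.Ioo_subset_Ioo le_rfl (le_of_lt (Int.fract_lt_one c))
  rw [hss, MeasureTheory.setIntegral_const]
  simp [Real.volume_Ioo, ENNReal.toReal_ofReal (Int.fract_nonneg c)]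

lemma le_bestSum {X : Type*} (φ : X → ℝ) {K : ℕ} {S B : Finset X} (hSB : S ⊆ B) (hSK : S.card ≤ K) :
    ∑ x ∈ S, φ x ≤ bestSum B K φ := by
  unfold bestSum
  exact Finset.le_sup' (fun S => ∑ x ∈ S, φ x) (Finset.mem_filter.mpr ⟨Finset.mem_powerset.mpr hSB, hSK⟩)

def indf {X : Type*} [Fintype X] {n : ℕ} (e : Fin n ≃ X) (p : ℕ → ℝ) (x : X) (u : ℝ) : ℝ :=
  ((⌈cf p ((e.symm x : ℕ) + 1) - u⌉ : ℤ) : ℝ) - ((⌈cf p (e.symm x : ℕ) - u⌉ : ℤ) : ℝ)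

lemma indf_eq_mem {X : Type*} [Fintype X] {n : ℕ} (e : Fin n ≃ X) (p : ℕ → ℝ)
    (hp0 : ∀ i, 0 ≤ p i) (hp1 : ∀ i, p i ≤ 1) (x : X) (u : ℝ) :
    indf e p x u = (if x ∈ Bset e p u then (1:ℝ) else 0) :=
  (ind_eq_mem e p hp0 hp1 x u).symm

lemma indf_integrable {X : Type*} [Fintype X] {n : ℕ} (e : Fin n ≃ X) (p : ℕ → ℝ) (x : X) :
    IntegrableOn (indf e p x) (Set.Ioo (0:ℝ) 1) volume :=
  (psi_integrable _).sub (psi_integrable _)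

lemma indf_integral {X : Type*} [Fintype X] {n : ℕ} (e : Fin n ≃ X) (φ1 : X → ℝ) (p : ℕ → ℝ)
    (hpe : ∀ i : Fin n, p (i : ℕ) = φ1 (e i)) (x : X) :
    ∫ u in Set.Ioo (0:ℝ) 1, indf e p x u = φ1 x := by
  have hsub : ∫ u in Set.Ioo (0:ℝ) 1, indf e p x u =
      (∫ u in Set.Ioo (0:ℝ) 1, ((⌈cf p ((e.symm x : ℕ) + 1) - u⌉ : ℤ) : ℝ))
        - ∫ u in Set.Ioo (0:ℝ) 1, ((⌈cf p (e.symm x : ℕ) - u⌉ : ℤ) : ℝ) :=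
    MeasureTheory.integral_sub (psi_integrable _) (psi_integrable _)
  rw [hsub, psi_integral, psi_integral, cf_succ]
  have hx := hpe (e.symm x)
  rw [e.apply_symm_apply] at hx
  rw [hx]; ring

lemma card_Tset {n : ℕ} {X : Type*} [Fintype X] (e : Fin n ≃ X) {m : ℕ} (hm : m ≤ n) :
    (Finset.univ.filter fun x : X => (e.symm x : ℕ) < m).card = m := by
  have h : (Finset.univ.filter fun x : X => (e.symm x : ℕ) < m).card = (Finset.range m).card := by
    apply Finset.card_bij (fun x _ => ((e.symm x : Fin n) : ℕ))
    · intro a ha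
      simp only [Finset.mem_filter, Finset.mem_univ, true_and] at ha
      simpa using ha
    · intro a _ b _ h
      exact e.symm.injective (Fin.ext h)
    · intro b hb
      simp only [Finset.mem_range] at hb
      refine ⟨e ⟨b, lt_of_lt_of_le hb hm⟩, ?_, ?_⟩
      · simp only [Finset.mem_filter, Finset.mem_univ, true_and, Equiv.symm_apply_apply]
        exact hb
      · simp
  rw [h, Finset.card_range]

lemma lower_bound {X : Type*} [Fintype X] (φ1 φ2 : X → ℝ) (K : ℕ) {n : ℕ} (e : Fin n ≃ X)
    (p : ℕ → ℝ) (hp0 : ∀ i, 0 ≤ p i) (hp1 : ∀ i, p i ≤ 1)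
    (hpe : ∀ i : Fin n, p (i : ℕ) = φ1 (e i))
    (α : ℝ) (P : Finset X)
    (H4 : ∀ u ∈ Set.Ioo (0:ℝ) 1, ∃ S : Finset X, S ⊆ Bset e p u ∧ S.card ≤ K ∧
      K*α + ∑ x ∈ Bset e p u ∩ P, (φ2 x - α) ≤ ∑ x ∈ S, φ2 x)
    (θ' : ℝ) (γ' : X → ℝ)
    (hfeas : ∀ B : Finset X, bestSum B K φ2 ≤ θ' + ∑ x ∈ B, γ' x) :
    K*α + ∑ x ∈ P, φ1 x * (φ2 x - α) ≤ θ' + ∑ x, φ1 x * γ' x := by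
  have hconst_int : ∀ r : ℝ, IntegrableOn (fun _ : ℝ => r) (Set.Ioo (0:ℝ) 1) volume := by
    intro r
    exact integrableOn_const (by simp [Real.volume_Ioo])
  have hg_int : IntegrableOn (fun u => θ' + ∑ x : X, γ' x * indf e p x u) (Set.Ioo (0:ℝ) 1) volume :=
    (hconst_int θ').add (integrable_finset_sum _ (fun x _ => (indf_integrable e p x).const_mul _))
  have hh_int : IntegrableOn (fun u => (K:ℝ)*α + ∑ x ∈ P, (φ2 x - α) * indf e p x u) (Set.Ioo (0:ℝ) 1) volume :=
    (hconst_int _).add (integrable_finset_sum _ (fun x _ => (indf_integrable e p x).const_mul _))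
  have key : ∀ u ∈ Set.Ioo (0:ℝ) 1,
      (K:ℝ)*α + ∑ x ∈ P, (φ2 x - α) * indf e p x u ≤ θ' + ∑ x : X, γ' x * indf e p x u := by
    intro u hu
    have hgu : (∑ x : X, γ' x * indf e p x u) = ∑ x ∈ Bset e p u, γ' x := by
      rw [Finset.sum_congr rfl (fun x _ => by
        rw [indf_eq_mem e p hp0 hp1 x u, mul_ite, mul_one, mul_zero] : ∀ x ∈ Finset.univ,
          γ' x * indf e p x u = if x ∈ Bset e p u then γ' x else 0)]
      rw [Finset.sum_ite_mem, Finset.univ_inter]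
    have hhu : (∑ x ∈ P, (φ2 x - α) * indf e p x u) = ∑ x ∈ Bset e p u ∩ P, (φ2 x - α) := by
      rw [Finset.sum_congr rfl (fun x _ => by
        rw [indf_eq_mem e p hp0 hp1 x u, mul_ite, mul_one, mul_zero] : ∀ x ∈ P,
          (φ2 x - α) * indf e p x u = if x ∈ Bset e p u then (φ2 x - α) else 0)]
      rw [Finset.sum_ite_mem, Finset.inter_comm]
    obtain ⟨S, hSB, hSK, hineq⟩ := H4 u hu
    have h2 : ∑ x ∈ S, φ2 x ≤ bestSum (Bset e p u) K φ2 := le_bestSum φ2 hSB hSK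
    have h3 := hfeas (Bset e p u)
    rw [hgu, hhu]
    linarith
  have hmain := MeasureTheory.setIntegral_mono_on hh_int hg_int measurableSet_Ioo key
  have hg_val : (∫ u in Set.Ioo (0:ℝ) 1, (θ' + ∑ x : X, γ' x * indf e p x u))
      = θ' + ∑ x, φ1 x * γ' x := by
    rw [MeasureTheory.integral_add (hconst_int θ')
      (integrable_finset_sum _ (fun x _ => (indf_integrable e p x).const_mul _))]
    rw [MeasureTheory.setIntegral_const,
      MeasureTheory.integral_finset_sum _ (fun x _ => (indf_integrable e p x).const_mul _)]
    rw [Finset.sum_congr rfl (fun x _ => by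
      rw [MeasureTheory.integral_const_mul, indf_integral e φ1 p hpe x, mul_comm] : ∀ x ∈ Finset.univ,
        (∫ u in Set.Ioo (0:ℝ) 1, γ' x * indf e p x u) = φ1 x * γ' x)]
    simp [Real.volume_Ioo]
  have hh_val : (∫ u in Set.Ioo (0:ℝ) 1, ((K:ℝ)*α + ∑ x ∈ P, (φ2 x - α) * indf e p x u))
      = K*α + ∑ x ∈ P, φ1 x * (φ2 x - α) := by
    rw [MeasureTheory.integral_add (hconst_int _)
      (integrable_finset_sum _ (fun x _ => (indf_integrable e p x).const_mul _))]
    rw [MeasureTheory.setIntegral_const,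
      MeasureTheory.integral_finset_sum _ (fun x _ => (indf_integrable e p x).const_mul _)]
    rw [Finset.sum_congr rfl (fun x _ => by
      rw [MeasureTheory.integral_const_mul, indf_integral e φ1 p hpe x, mul_comm] : ∀ x ∈ P,
        (∫ u in Set.Ioo (0:ℝ) 1, (φ2 x - α) * indf e p x u) = φ1 x * (φ2 x - α))]
    simp [Real.volume_Ioo]
  rw [hg_val, hh_val] at hmain
  exact hmain

/-- structure of an optimal dual solution: there is an optimal solution
`(θ*, γ*)` with nonnegative entries, a set `B*` of cardinality `K`, and `α* ≥ 0` with
`φ²(x) - γ*(x) = α*` on `B*`, `φ²(x) - γ*(x) ≤ α*` off `B*`, and `θ* = K·α*`. -/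
theorem dual_optimal_structure {X : Type*} [Fintype X] (φ1 φ2 : X → ℝ)
    (hφ1 : ∀ x, 0 ≤ φ1 x ∧ φ1 x ≤ 1) (hφ2 : ∀ x, 0 ≤ φ2 x ∧ φ2 x ≤ 1)
    (K : ℕ) (hK : K ≤ Fintype.card X) :
    ∃ (θ : ℝ) (γ : X → ℝ) (Bstar : Finset X) (α : ℝ),
      (∀ B : Finset X, bestSum B K φ2 ≤ θ + ∑ x ∈ B, γ x) ∧
      (∀ (θ' : ℝ) (γ' : X → ℝ),
        (∀ B : Finset X, bestSum B K φ2 ≤ θ' + ∑ x ∈ B, γ' x) →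
        θ + ∑ x, φ1 x * γ x ≤ θ' + ∑ x, φ1 x * γ' x) ∧
      0 ≤ θ ∧ (∀ x, 0 ≤ γ x) ∧
      Bstar.card = K ∧ 0 ≤ α ∧
      (∀ x ∈ Bstar, φ2 x - γ x = α) ∧
      (∀ x ∉ Bstar, φ2 x - γ x ≤ α) ∧
      θ = K * α := by
  classical
  set n := Fintype.card X with hn
  obtain ⟨e, hA⟩ : ∃ e : Fin n ≃ X,
      ∀ i j : Fin n, i ≤ j → φ2 (e j) ≤ φ2 (e i) := by
    set g0 : Fin n ≃ X := (Fintype.equivFin X).symm with hg0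
    set f : Fin n → ℝ := fun i => -φ2 (g0 i) with hf
    refine ⟨(Tuple.sort f).trans g0, ?_⟩
    intro i j hij
    have := Tuple.monotone_sort f hij
    simp only [hf, Function.comp_apply] at this
    simp only [Equiv.trans_apply]
    linarith
  set p : ℕ → ℝ := fun i => if h : i < n then φ1 (e ⟨i, h⟩) else 0 with hp
  have hp0 : ∀ i, 0 ≤ p i := by
    intro i; rw [hp]; dsimp only; split_ifs with h
    · exact (hφ1 _).1
    · exact le_refl 0
  have hp1 : ∀ i, p i ≤ 1 := by
    intro i; rw [hp]; dsimp only; split_ifs with h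
    · exact (hφ1 _).2
    · exact zero_le_one
  have hpe : ∀ i : Fin n, p (i : ℕ) = φ1 (e i) := by
    intro i; rw [hp]; dsimp only; rw [dif_pos i.isLt]
  have hcfle : ∀ m, cf p m ≤ m := by
    intro m
    calc cf p m ≤ ∑ _i ∈ Finset.range m, (1:ℝ) := Finset.sum_le_sum (fun i _ => hp1 i)
      _ = m := by simp
  have hmono : ∀ (x : X) (j : Fin n), ((e.symm x : ℕ) ≤ (j:ℕ)) → φ2 (e j) ≤ φ2 x := by
    intro x j hij
    have h := hA (e.symm x) j (by rwa [Fin.le_def])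
    rwa [e.apply_symm_apply] at h
  have hmono' : ∀ (x : X) (j : Fin n), ((j:ℕ) ≤ (e.symm x : ℕ)) → φ2 x ≤ φ2 (e j) := by
    intro x j hij
    have h := hA j (e.symm x) (by rwa [Fin.le_def])
    rwa [e.apply_symm_apply] at h
  suffices H : ∃ (α : ℝ) (P Bstar : Finset X), 0 ≤ α ∧ (∀ x ∈ P, α ≤ φ2 x) ∧
      (∀ x ∉ P, φ2 x ≤ α) ∧ Bstar.card = K ∧ (∀ x ∈ Bstar, α ≤ φ2 x) ∧
      (∀ u ∈ Set.Ioo (0:ℝ) 1, ∃ S : Finset X, S ⊆ Bset e p u ∧ S.card ≤ K ∧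
        K*α + ∑ x ∈ Bset e p u ∩ P, (φ2 x - α) ≤ ∑ x ∈ S, φ2 x) by
    obtain ⟨α, P, Bstar, H1, H2, H3, H5, H6, H4⟩ := H
    refine ⟨K*α, fun x => max (φ2 x - α) 0, Bstar, α, ?_, ?_, ?_, fun x => le_max_right _ _,
      H5, H1, ?_, ?_, rfl⟩
    · -- feasibility
      intro B
      unfold bestSum
      apply Finset.sup'_le
      intro S hS
      rw [Finset.mem_filter, Finset.mem_powerset] at hS
      obtain ⟨hSB, hSK⟩ := hS
      calc ∑ x ∈ S, φ2 x ≤ ∑ x ∈ S, (α + max (φ2 x - α) 0) :=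
            Finset.sum_le_sum (fun x _ => by linarith [le_max_left (φ2 x - α) 0])
        _ = S.card * α + ∑ x ∈ S, max (φ2 x - α) 0 := by
            rw [Finset.sum_add_distrib, Finset.sum_const, nsmul_eq_mul]
        _ ≤ K*α + ∑ x ∈ B, max (φ2 x - α) 0 := by
            have h1 : (S.card:ℝ)*α ≤ K*α :=
              mul_le_mul_of_nonneg_right (by exact_mod_cast hSK) H1
            have h2 := Finset.sum_le_sum_of_subset_of_nonneg hSB
              (fun x _ _ => le_max_right (φ2 x - α) 0)
            linarith
    · -- optimality
      intro θ' γ' hfeas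
      have hsumγ : ∑ x, φ1 x * max (φ2 x - α) 0 = ∑ x ∈ P, φ1 x * (φ2 x - α) := by
        rw [← Finset.sum_subset (Finset.subset_univ P) (fun x _ hx => by
          rw [max_eq_right (by linarith [H3 x hx]), mul_zero])]
        exact Finset.sum_congr rfl (fun x hx => by rw [max_eq_left (by linarith [H2 x hx])])
      rw [hsumγ]
      exact lower_bound φ1 φ2 K e p hp0 hp1 hpe α P H4 θ' γ' hfeas
    · exact mul_nonneg (Nat.cast_nonneg K) H1
    · intro x hx
      show φ2 x - max (φ2 x - α) 0 = α
      rw [max_eq_left (by linarith [H6 x hx])]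
      ring
    · intro x _
      show φ2 x - max (φ2 x - α) 0 ≤ α
      linarith [le_max_left (φ2 x - α) 0]
  by_cases hK0 : K = 0
  · subst hK0
    refine ⟨1, ∅, ∅, by norm_num, by simp, fun x _ => (hφ2 x).2, by simp, by simp, ?_⟩
    intro u hu
    exact ⟨∅, Finset.empty_subset _, by simp, by simp⟩
  by_cases hicase : (K:ℝ) ≤ cf p n
  · -- case A: enough total mass
    have hex : ∃ m, (K:ℝ) ≤ cf p m := ⟨n, hicase⟩
    set r := Nat.find hex with hr
    have hcr : (K:ℝ) ≤ cf p r := Nat.find_spec hex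
    have hrn : r ≤ n := Nat.find_min' hex hicase
    have hr1 : 1 ≤ r := by
      rcases Nat.eq_zero_or_pos r with h0 | h1
      · exfalso
        rw [h0] at hcr
        simp [cf] at hcr
        exact hK0 hcr
      · exact h1
    have hq : r - 1 < n := lt_of_lt_of_le (Nat.sub_lt hr1 one_pos) hrn
    have hclt : cf p (r-1) < K := by
      have h := Nat.find_min hex (m := r-1) (Nat.sub_lt hr1 one_pos)
      push_neg at h
      exact h
    have hKr : K ≤ r := by
      have : (K:ℝ) ≤ r := le_trans hcr (hcfle r)
      exact_mod_cast this
    refine ⟨φ2 (e ⟨r-1, hq⟩), Finset.univ.filter (fun x => (e.symm x : ℕ) < r-1),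
      Finset.univ.filter (fun x => (e.symm x : ℕ) < K), (hφ2 _).1, ?_, ?_, ?_, ?_, ?_⟩
    · intro x hx
      rw [Finset.mem_filter] at hx
      obtain ⟨-, hxlt⟩ := hx
      exact hmono x ⟨r-1, hq⟩ (show (e.symm x : ℕ) ≤ r-1 by omega)
    · intro x hx
      rw [Finset.mem_filter] at hx
      push_neg at hx
      have hge : r - 1 ≤ (e.symm x : ℕ) := hx (Finset.mem_univ x)
      exact hmono' x ⟨r-1, hq⟩ (show ((⟨r-1, hq⟩ : Fin n) : ℕ) ≤ (e.symm x : ℕ) from hge)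
    · -- card = K
      exact card_Tset e hK
    · intro x hx
      rw [Finset.mem_filter] at hx
      obtain ⟨-, hxlt⟩ := hx
      exact hmono x ⟨r-1, hq⟩ (show (e.symm x : ℕ) ≤ r-1 by omega)
    · -- H4
      intro u hu
      have hcardA : ((Bset e p u ∩ Finset.univ.filter (fun x : X => (e.symm x : ℕ) < r-1)).card : ℤ)
          = ⌈cf p (r-1) - u⌉ := card_Bset_inter e hp0 hp1 hu (le_trans (Nat.sub_le r 1) hrn)
      have hcardD : ((Bset e p u ∩ Finset.univ.filter (fun x : X => (e.symm x : ℕ) < r)).card : ℤ)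
          = ⌈cf p r - u⌉ := card_Bset_inter e hp0 hp1 hu hrn
      have hAK : (Bset e p u ∩ Finset.univ.filter (fun x : X => (e.symm x : ℕ) < r-1)).card ≤ K := by
        have : ⌈cf p (r-1) - u⌉ ≤ (K:ℤ) := Int.ceil_le.mpr (by push_cast; linarith [hu.1])
        omega
      have hKD : K ≤ (Bset e p u ∩ Finset.univ.filter (fun x : X => (e.symm x : ℕ) < r)).card := by
        have h2 : (((K:ℤ) - 1 : ℤ) : ℝ) < cf p r - u := by push_cast; linarith [hu.2]
        have h3 : (K:ℤ) - 1 < ⌈cf p r - u⌉ :=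
          lt_of_lt_of_le (by exact_mod_cast h2 : (((K:ℤ) - 1 : ℤ) : ℝ) < cf p r - u) (Int.le_ceil _) |> fun h => by
            exact_mod_cast Int.lt_ceil.mpr h2
        omega
      have hAD : (Bset e p u ∩ Finset.univ.filter (fun x : X => (e.symm x : ℕ) < r-1))
          ⊆ (Bset e p u ∩ Finset.univ.filter (fun x : X => (e.symm x : ℕ) < r)) := by
        apply Finset.inter_subset_inter (subset_refl _)
        apply Finset.monotone_filter_right
        intro x hx
        omega
      obtain ⟨S, hAS, hSD, hScard⟩ := Finset.exists_subsuperset_card_eq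
        (n := (K - (Bset e p u ∩ Finset.univ.filter (fun x : X => (e.symm x : ℕ) < r-1)).card)
          + (Bset e p u ∩ Finset.univ.filter (fun x : X => (e.symm x : ℕ) < r-1)).card)
        hAD (by omega) (by rw [Nat.sub_add_cancel hAK]; exact hKD)
      rw [Nat.sub_add_cancel hAK] at hScard
      refine ⟨S, hSD.trans Finset.inter_subset_left, le_of_eq hScard, ?_⟩
      have hSnn : ∀ x ∈ S, 0 ≤ φ2 x - φ2 (e ⟨r-1, hq⟩) := by
        intro x hxS
        have hxD := hSD hxS
        rw [Finset.mem_inter, Finset.mem_filter] at hxD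
        obtain ⟨-, -, hxr⟩ := hxD
        have := hmono x ⟨r-1, hq⟩ (show (e.symm x : ℕ) ≤ r-1 by omega)
        linarith
      have hsub : ∑ x ∈ (Bset e p u ∩ Finset.univ.filter (fun x : X => (e.symm x : ℕ) < r-1)),
          (φ2 x - φ2 (e ⟨r-1, hq⟩)) ≤ ∑ x ∈ S, (φ2 x - φ2 (e ⟨r-1, hq⟩)) :=
        Finset.sum_le_sum_of_subset_of_nonneg hAS (fun x hxS _ => hSnn x hxS)
      have hsplit : ∑ x ∈ S, φ2 x = ∑ x ∈ S, (φ2 x - φ2 (e ⟨r-1, hq⟩)) + K * φ2 (e ⟨r-1, hq⟩) := by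
        rw [Finset.sum_sub_distrib, Finset.sum_const, hScard, nsmul_eq_mul]
        ring
      rw [hsplit]
      linarith
  · -- case B: low total mass
    push_neg at hicase
    obtain ⟨Bstar, hBsub, hBcard⟩ := Finset.exists_subset_card_eq (s := (Finset.univ : Finset X)) (n := K)
      (by rw [Finset.card_univ]; exact hK)
    refine ⟨0, Finset.univ, Bstar, le_refl 0, fun x _ => (hφ2 x).1,
      fun x hx => absurd (Finset.mem_univ x) hx, hBcard, fun x _ => (hφ2 x).1, ?_⟩
    intro u hu
    refine ⟨Bset e p u, subset_refl _, ?_, ?_⟩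
    · have hTn : (Finset.univ.filter (fun x : X => (e.symm x : ℕ) < n)) = Finset.univ := by
        apply Finset.filter_true_of_mem
        intro x _
        exact (e.symm x).isLt
      have hcard : ((Bset e p u ∩ Finset.univ.filter (fun x : X => (e.symm x : ℕ) < n)).card : ℤ)
          = ⌈cf p n - u⌉ := card_Bset_inter e hp0 hp1 hu (le_refl n)
      rw [hTn, Finset.inter_univ] at hcard
      have : ⌈cf p n - u⌉ ≤ (K:ℤ) := Int.ceil_le.mpr (by push_cast; linarith [hu.1])
      omega
    · rw [Finset.inter_univ]
      simp [Finset.sum_sub_distrib]
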